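/- Let Δ ≥ 0, k ∈ ℕ, and γ > 0. Write k₁ = k + 1/2 and r₁ = −γ/2 + √(k₁ + γ²/4). Then 0 ≤ ∫_{{r > 0 : |r − r₁| ≥ Δ}} r·e^{−r²}·( ∫_{−π}^{π} (r² + γ² + 2γr·cos θ)^k dθ ) dr ≤ 2π^{3/2}·(r₁ + γ)^{2k+1}·e^{−r₁²}·(1 − erf(Δ)). -/

import Mathlib

open MeasureTheory

/-- The error function `erf z = (2/√π) ∫₀^z e^{-t²} dt`. -/
noncomputable def erf (z : ℝ) : ℝ :=
  2 / Real.sqrt Real.pi * ∫ t in (0 : ℝ)..z, Real.exp (-t ^ 2)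

/-- The critical point `r₁ = -γ/2 + √(k₁ + γ²/4)` of `G(r) = (2k+1) log(r+γ) - r²`,
where `k₁ = k + 1/2`. -/
noncomputable def rOne (γ : ℝ) (k : ℕ) : ℝ :=
  -γ / 2 + Real.sqrt (((k : ℝ) + 1 / 2) + γ ^ 2 / 4)

lemma rOne_pos (γ : ℝ) (hγ : 0 < γ) (k : ℕ) : 0 < rOne γ k := by
  have h : γ / 2 < Real.sqrt (((k : ℝ) + 1 / 2) + γ ^ 2 / 4) := by
    rw [show γ / 2 = Real.sqrt ((γ/2)^2) by rw [Real.sqrt_sq (by positivity)]]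
    apply Real.sqrt_lt_sqrt (by positivity)
    have : (0:ℝ) ≤ (k:ℝ) := Nat.cast_nonneg k
    nlinarith
  rw [rOne]; linarith

lemma rOne_mul (γ : ℝ) (hγ : 0 < γ) (k : ℕ) :
    rOne γ k * (rOne γ k + γ) = (k : ℝ) + 1 / 2 := by
  have h : Real.sqrt (((k : ℝ) + 1 / 2) + γ ^ 2 / 4) ^ 2 = ((k : ℝ) + 1 / 2) + γ ^ 2 / 4 :=
    Real.sq_sqrt (by positivity)
  rw [rOne]; nlinarith [h]

/-- The key concavity inequality:
`(r+γ)^{2k+1} e^{-r²} ≤ (r₁+γ)^{2k+1} e^{-r₁²} e^{-(r-r₁)²}` for `r > 0`. -/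
lemma key_ineq (γ : ℝ) (hγ : 0 < γ) (k : ℕ) (r : ℝ) (hr : 0 < r) :
    (r + γ) ^ (2 * k + 1) * Real.exp (-r ^ 2) ≤
      (rOne γ k + γ) ^ (2 * k + 1) * Real.exp (-(rOne γ k) ^ 2) *
        Real.exp (-(r - rOne γ k) ^ 2) := by
  set r₁ := rOne γ k with hr1
  have hr1pos : 0 < r₁ := rOne_pos γ hγ k
  have hmul : r₁ * (r₁ + γ) = (k : ℝ) + 1 / 2 := rOne_mul γ hγ k
  have hrγ : 0 < r + γ := by linarith
  have hr1γ : 0 < r₁ + γ := by linarith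
  have hlog : Real.log (r + γ) ≤ Real.log (r₁ + γ) + (r - r₁) / (r₁ + γ) := by
    have h1 : Real.log ((r + γ) / (r₁ + γ)) ≤ (r + γ) / (r₁ + γ) - 1 :=
      Real.log_le_sub_one_of_pos (by positivity)
    rw [Real.log_div (ne_of_gt hrγ) (ne_of_gt hr1γ)] at h1
    have h2 : (r + γ) / (r₁ + γ) - 1 = (r - r₁) / (r₁ + γ) := by
      field_simp
      ring
    linarith [h1, h2.le]
  have hG : ((2 * k + 1) : ℝ) * Real.log (r + γ) - r ^ 2 ≤
      ((2 * k + 1) : ℝ) * Real.log (r₁ + γ) - r₁ ^ 2 - (r - r₁) ^ 2 := by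
    have h3 : ((2 * k + 1) : ℝ) * ((r - r₁) / (r₁ + γ)) = 2 * r₁ * (r - r₁) := by
      field_simp
      nlinarith [hmul]
    have h4 : ((2 * k + 1) : ℝ) * Real.log (r + γ) ≤
        ((2 * k + 1) : ℝ) * Real.log (r₁ + γ) + 2 * r₁ * (r - r₁) := by
      have hk : (0:ℝ) ≤ (2 * k + 1 : ℝ) := by positivity
      nlinarith [mul_le_mul_of_nonneg_left hlog hk]
    nlinarith
  have hpe : ∀ x : ℝ, 0 < x → x ^ (2 * k + 1) = Real.exp (((2 * k + 1 : ℕ) : ℝ) * Real.log x) := by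
    intro x hx
    rw [← Real.log_pow, Real.exp_log (pow_pos hx _)]
  have hL : (r + γ) ^ (2 * k + 1) * Real.exp (-r ^ 2) =
      Real.exp (((2 * k + 1) : ℝ) * Real.log (r + γ) - r ^ 2) := by
    rw [hpe _ hrγ, ← Real.exp_add]
    push_cast
    ring_nf
  have hR : (r₁ + γ) ^ (2 * k + 1) * Real.exp (-r₁ ^ 2) * Real.exp (-(r - r₁) ^ 2) =
      Real.exp (((2 * k + 1) : ℝ) * Real.log (r₁ + γ) - r₁ ^ 2 - (r - r₁) ^ 2) := by
    rw [hpe _ hr1γ, ← Real.exp_add, ← Real.exp_add]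
    push_cast
    ring_nf
  rw [hL, hR]
  exact Real.exp_le_exp.mpr hG

set_option maxHeartbeats 1000000 in
/-- Tail bound: the contribution to the Fock norm from `{r > 0 : |r - r₁| ≥ Δ}` lies
between `0` and `2π^{3/2} (r₁+γ)^{2k+1} e^{-r₁²} (1 - erf Δ)`. -/
theorem radial_tail_bounds (Δ : ℝ) (hΔ : 0 ≤ Δ) (k : ℕ) (γ : ℝ) (hγ : 0 < γ) :
    0 ≤ (∫ r in {r : ℝ | 0 < r ∧ Δ ≤ |r - rOne γ k|},
        r * Real.exp (-r ^ 2) *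
          ∫ θ in (-Real.pi)..Real.pi, (r ^ 2 + γ ^ 2 + 2 * γ * r * Real.cos θ) ^ k) ∧
    (∫ r in {r : ℝ | 0 < r ∧ Δ ≤ |r - rOne γ k|},
        r * Real.exp (-r ^ 2) *
          ∫ θ in (-Real.pi)..Real.pi, (r ^ 2 + γ ^ 2 + 2 * γ * r * Real.cos θ) ^ k) ≤
      2 * Real.pi ^ ((3 : ℝ) / 2) * (rOne γ k + γ) ^ (2 * k + 1) *
        Real.exp (-(rOne γ k) ^ 2) * (1 - erf Δ) := by
  set r₁ := rOne γ k with hr1def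
  have hr1pos : 0 < r₁ := rOne_pos γ hγ k
  set s : Set ℝ := {r : ℝ | 0 < r ∧ Δ ≤ |r - r₁|} with hsdef
  set f : ℝ → ℝ := fun r => r * Real.exp (-r ^ 2) *
      ∫ θ in (-Real.pi)..Real.pi, (r ^ 2 + γ ^ 2 + 2 * γ * r * Real.cos θ) ^ k with hfdef
  set M : ℝ := (r₁ + γ) ^ (2 * k + 1) * Real.exp (-r₁ ^ 2) with hMdef
  set g : ℝ → ℝ := fun r => 2 * Real.pi * M * Real.exp (-(r - r₁) ^ 2) with hgdef
  have hs : MeasurableSet s := by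
    have h1 : MeasurableSet {r : ℝ | 0 < r} := measurableSet_Ioi
    have h2 : MeasurableSet {r : ℝ | Δ ≤ |r - r₁|} := by
      apply measurableSet_le measurable_const
      exact (measurable_id.sub_const r₁).abs
    exact h1.inter h2
  -- pointwise nonnegativity on s
  have hinner_nonneg : ∀ r : ℝ, 0 < r →
      0 ≤ ∫ θ in (-Real.pi)..Real.pi, (r ^ 2 + γ ^ 2 + 2 * γ * r * Real.cos θ) ^ k := by
    intro r hr
    apply intervalIntegral.integral_nonneg (by linarith [Real.pi_pos])
    intro θ _
    apply pow_nonneg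
    nlinarith [mul_nonneg (mul_pos hγ hr).le
      (by linarith [Real.neg_one_le_cos θ] : (0:ℝ) ≤ 1 + Real.cos θ), sq_nonneg (r - γ)]
  have hf_nonneg : ∀ r ∈ s, 0 ≤ f r := by
    intro r hrs
    have hr : 0 < r := hrs.1
    have := hinner_nonneg r hr
    have h1 : 0 ≤ r * Real.exp (-r ^ 2) := by positivity
    exact mul_nonneg h1 this
  constructor
  · exact setIntegral_nonneg hs hf_nonneg
  -- upper bound
  have hMpos : 0 < M := by
    have : (0:ℝ) < r₁ + γ := by linarith
    positivity
  -- pointwise bound f ≤ g on s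
  have hfg : ∀ r ∈ s, f r ≤ g r := by
    intro r hrs
    have hr : 0 < r := hrs.1
    have hbound : (∫ θ in (-Real.pi)..Real.pi, (r ^ 2 + γ ^ 2 + 2 * γ * r * Real.cos θ) ^ k) ≤
        2 * Real.pi * (r + γ) ^ (2 * k) := by
      have h1 : (∫ θ in (-Real.pi)..Real.pi, (r ^ 2 + γ ^ 2 + 2 * γ * r * Real.cos θ) ^ k) ≤
          ∫ _ in (-Real.pi)..Real.pi, (r + γ) ^ (2 * k) := by
        apply intervalIntegral.integral_mono_on (by linarith [Real.pi_pos])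
        · apply Continuous.intervalIntegrable
          continuity
        · exact intervalIntegrable_const
        · intro θ _
          have hb : r ^ 2 + γ ^ 2 + 2 * γ * r * Real.cos θ ≤ (r + γ) ^ 2 := by
            nlinarith [mul_nonneg (mul_pos hγ hr).le
              (by linarith [Real.cos_le_one θ] : (0:ℝ) ≤ 1 - Real.cos θ)]
          have hnn : 0 ≤ r ^ 2 + γ ^ 2 + 2 * γ * r * Real.cos θ := by
            nlinarith [mul_nonneg (mul_pos hγ hr).le
              (by linarith [Real.neg_one_le_cos θ] : (0:ℝ) ≤ 1 + Real.cos θ), sq_nonneg (r - γ)]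
          calc (r ^ 2 + γ ^ 2 + 2 * γ * r * Real.cos θ) ^ k ≤ ((r + γ) ^ 2) ^ k :=
                pow_le_pow_left₀ hnn hb k
            _ = (r + γ) ^ (2 * k) := by rw [← pow_mul]
      rw [intervalIntegral.integral_const] at h1
      calc (∫ θ in (-Real.pi)..Real.pi, (r ^ 2 + γ ^ 2 + 2 * γ * r * Real.cos θ) ^ k) ≤
            (Real.pi - (-Real.pi)) • (r + γ) ^ (2 * k) := h1
        _ = 2 * Real.pi * (r + γ) ^ (2 * k) := by rw [smul_eq_mul]; ring
    have hstep1 : f r ≤ 2 * Real.pi * ((r + γ) ^ (2 * k + 1) * Real.exp (-r ^ 2)) := by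
      have h1 : 0 ≤ r * Real.exp (-r ^ 2) := by positivity
      have h2 : f r ≤ r * Real.exp (-r ^ 2) * (2 * Real.pi * (r + γ) ^ (2 * k)) :=
        mul_le_mul_of_nonneg_left hbound h1
      have h3 : r * Real.exp (-r ^ 2) * (2 * Real.pi * (r + γ) ^ (2 * k)) ≤
          2 * Real.pi * ((r + γ) ^ (2 * k + 1) * Real.exp (-r ^ 2)) := by
        have hrg : r ≤ r + γ := by linarith
        have hpow : r * (r + γ) ^ (2 * k) ≤ (r + γ) ^ (2 * k + 1) := by
          rw [pow_succ]
          have hp : (0:ℝ) ≤ (r + γ) ^ (2 * k) := by positivity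
          nlinarith
        have h := mul_le_mul_of_nonneg_left hpow
          (show (0:ℝ) ≤ 2 * Real.pi * Real.exp (-r ^ 2) by positivity)
        calc r * Real.exp (-r ^ 2) * (2 * Real.pi * (r + γ) ^ (2 * k))
            = 2 * Real.pi * Real.exp (-r ^ 2) * (r * (r + γ) ^ (2 * k)) := by ring
          _ ≤ 2 * Real.pi * Real.exp (-r ^ 2) * (r + γ) ^ (2 * k + 1) := h
          _ = 2 * Real.pi * ((r + γ) ^ (2 * k + 1) * Real.exp (-r ^ 2)) := by ring
      linarith
    have hstep2 : (r + γ) ^ (2 * k + 1) * Real.exp (-r ^ 2) ≤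
        M * Real.exp (-(r - r₁) ^ 2) := by
      have := key_ineq γ hγ k r hr
      rw [hMdef]; linarith
    calc f r ≤ 2 * Real.pi * ((r + γ) ^ (2 * k + 1) * Real.exp (-r ^ 2)) := hstep1
      _ ≤ 2 * Real.pi * (M * Real.exp (-(r - r₁) ^ 2)) := by
          have := Real.pi_pos; nlinarith
      _ = g r := by rw [hgdef]; ring
  -- integrability of g
  have hgauss : Integrable (fun x : ℝ => Real.exp (-x ^ 2)) := by
    have := integrable_exp_neg_mul_sq (one_pos (α := ℝ))
    simpa using this
  have hg_int : Integrable g := by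
    have h1 : Integrable (fun x : ℝ => Real.exp (-(x - r₁) ^ 2)) := hgauss.comp_sub_right r₁
    exact h1.const_mul _
  -- continuity of f
  have hf_cont : Continuous f := by
    have hFc : Continuous (Function.uncurry fun r θ : ℝ =>
        (r ^ 2 + γ ^ 2 + 2 * γ * r * Real.cos θ) ^ k) := by
      have h1 : Continuous fun p : ℝ × ℝ => p.1 ^ 2 + γ ^ 2 + 2 * γ * p.1 * Real.cos p.2 :=
        ((continuous_fst.pow 2).add continuous_const).add
          ((continuous_const.mul continuous_fst).mul (Real.continuous_cos.comp continuous_snd))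
      exact h1.pow k
    have hinner : Continuous fun r : ℝ =>
        ∫ θ in (-Real.pi)..Real.pi, (r ^ 2 + γ ^ 2 + 2 * γ * r * Real.cos θ) ^ k :=
      intervalIntegral.continuous_parametric_intervalIntegral_of_continuous' hFc _ _
    rw [hfdef]
    exact (continuous_id.mul (Real.continuous_exp.comp (continuous_pow 2).neg)).mul hinner
  -- integrability of f on s
  have hf_int : IntegrableOn f s := by
    apply Integrable.mono' (hg_int.integrableOn) (hf_cont.aestronglyMeasurable.restrict)
    rw [ae_restrict_iff' hs]
    filter_upwards with r hrs
    rw [Real.norm_eq_abs, abs_of_nonneg (hf_nonneg r hrs)]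
    exact hfg r hrs
  -- the tail set
  set t : Set ℝ := {r : ℝ | Δ ≤ |r - r₁|} with htdef
  have ht : MeasurableSet t := by
    apply measurableSet_le measurable_const
    exact (measurable_id.sub_const r₁).abs
  have hst : s ⊆ t := fun r hr => hr.2
  have hg_nonneg : ∀ r : ℝ, 0 ≤ g r := by
    intro r
    have := Real.pi_pos
    rw [hgdef]
    positivity
  have step1 : (∫ r in s, f r) ≤ ∫ r in s, g r :=
    setIntegral_mono_on hf_int hg_int.integrableOn hs hfg
  have step2 : (∫ r in s, g r) ≤ ∫ r in t, g r := by
    apply setIntegral_mono_set hg_int.integrableOn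
    · filter_upwards with r using hg_nonneg r
    · filter_upwards with r hr using hst hr
  -- compute ∫ r in t, g r
  set t₀ : Set ℝ := {u : ℝ | Δ ≤ |u|} with ht0def
  have ht0 : MeasurableSet t₀ := by
    apply measurableSet_le measurable_const
    exact measurable_id.abs
  have htrans : (∫ r in t, Real.exp (-(r - r₁) ^ 2)) = ∫ u in t₀, Real.exp (-u ^ 2) := by
    rw [← integral_indicator ht, ← integral_indicator ht0]
    rw [← integral_sub_right_eq_self (t₀.indicator fun u => Real.exp (-u ^ 2)) r₁]
    congr 1
  have hcompl : t₀ᶜ = Set.Ioo (-Δ) Δ := by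
    ext u
    simp only [Set.mem_compl_iff, ht0def, Set.mem_setOf_eq, not_le, Set.mem_Ioo, abs_lt]
  have htail : (∫ u in t₀, Real.exp (-u ^ 2)) =
      Real.sqrt Real.pi * (1 - erf Δ) := by
    have htotal : (∫ u : ℝ, Real.exp (-u ^ 2)) = Real.sqrt Real.pi := by
      have := integral_gaussian 1
      simpa using this
    have hsplit : (∫ u in t₀, Real.exp (-u ^ 2)) + (∫ u in t₀ᶜ, Real.exp (-u ^ 2)) =
        Real.sqrt Real.pi := by
      rw [integral_add_compl ht0 hgauss, htotal]
    have hmid : (∫ u in t₀ᶜ, Real.exp (-u ^ 2)) = 2 * ∫ u in (0:ℝ)..Δ, Real.exp (-u ^ 2) := by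
      rw [hcompl, ← MeasureTheory.integral_Ioc_eq_integral_Ioo,
        ← intervalIntegral.integral_of_le (by linarith : -Δ ≤ Δ) (μ := volume)
        (f := fun u => Real.exp (-u ^ 2))]
      rw [← intervalIntegral.integral_add_adjacent_intervals
        (a := -Δ) (b := 0) (c := Δ)
        hgauss.intervalIntegrable hgauss.intervalIntegrable]
      have hneg : (∫ u in (-Δ:ℝ)..0, Real.exp (-u ^ 2)) =
          ∫ u in (0:ℝ)..Δ, Real.exp (-u ^ 2) := by
        rw [show (∫ u in (-Δ:ℝ)..0, Real.exp (-u ^ 2)) =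
            ∫ u in (-Δ:ℝ)..(-(0:ℝ)), Real.exp (-u ^ 2) by norm_num]
        rw [← intervalIntegral.integral_comp_neg (fun u => Real.exp (-u ^ 2))]
        simp [neg_sq]
      rw [hneg]; ring
    have herf : Real.sqrt Real.pi * (1 - erf Δ) =
        Real.sqrt Real.pi - 2 * ∫ u in (0:ℝ)..Δ, Real.exp (-u ^ 2) := by
      have hπ : Real.sqrt Real.pi ≠ 0 := by
        positivity
      rw [erf]
      field_simp
    rw [herf]
    linarith [hsplit, hmid.le, hmid.ge]
  have hgval : (∫ r in t, g r) = 2 * Real.pi * M * (Real.sqrt Real.pi * (1 - erf Δ)) := by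
    rw [hgdef]
    simp only
    rw [integral_const_mul, htrans, htail]
  -- final assembly
  have hrpow : Real.pi ^ ((3:ℝ)/2) = Real.pi * Real.sqrt Real.pi := by
    have hπ : (0:ℝ) < Real.pi := Real.pi_pos
    rw [show (3:ℝ)/2 = 1 + 1/2 by norm_num, Real.rpow_add hπ, Real.rpow_one,
      ← Real.sqrt_eq_rpow]
  have hfinal : 2 * Real.pi * M * (Real.sqrt Real.pi * (1 - erf Δ)) =
      2 * Real.pi ^ ((3:ℝ)/2) * (r₁ + γ) ^ (2 * k + 1) * Real.exp (-r₁ ^ 2) * (1 - erf Δ) := by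
    rw [hrpow, hMdef]; ring
  calc (∫ r in s, f r) ≤ ∫ r in s, g r := step1
    _ ≤ ∫ r in t, g r := step2
    _ = 2 * Real.pi * M * (Real.sqrt Real.pi * (1 - erf Δ)) := hgval
    _ = _ := hfinal
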